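/- arXiv:2012.02652 — 3 statements merged into one kernel-verified Lean document; each statement's English description precedes it below -/
import Mathlib

section
/- Suppose the ad request set is partitioned into finitely many sub-markets R^h, each with constant value-per-conversion v^h > 0, and for each h the sub-market mechanism satisfies cpa_h(γ) = v^h/(1+γ) with γ ↦ ((1+γ−I)/(1+γ))·cv_h(γ) non-increasing and cv_h(γ) > 0. Then the combined episode-level mechanism is IC and IR: the aggregate delivered ROI under report γ equals γ exactly, and the total utility Σ_h (v^h − I·cpa_h(γ))·cv_h(γ) = ((1+γ−I)/(1+γ))·Σ_h v^h·cv_h(γ) is non-increasing in γ. -/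
/-- Composition across sub-markets: if in every sub-market h the mechanism satisfies
cpa_h(γ) = v^h/(1+γ) with ((1+γ−I)/(1+γ))·cv_h(γ) non-increasing and cv_h > 0, then at
the episode level the aggregate delivered ROI under report γ equals γ, the total utility
equals ((1+γ−I)/(1+γ))·Σ_h v^h·cv_h(γ), and is non-increasing in γ. -/
theorem submarket_composition_ic_ir
    {H : Type*} [Fintype H] [Nonempty H]
    (I : ℝ) (hI : I = 0 ∨ I = 1)
    (Γ : Set ℝ) (hΓ : Γ = Set.Ioi (-1 + I))
    (v : H → ℝ) (hv : ∀ h, 0 < v h)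
    (cpa cv : H → ℝ → ℝ)
    (hcpa : ∀ h, ∀ γ ∈ Γ, cpa h γ = v h / (1 + γ))
    (hcv : ∀ h, ∀ γ ∈ Γ, 0 < cv h γ)
    (hmono : ∀ h, AntitoneOn (fun γ => ((1 + γ - I) / (1 + γ)) * cv h γ) Γ) :
    (∀ γ ∈ Γ,
      (∑ h, (v h - cpa h γ) * cv h γ) / (∑ h, cpa h γ * cv h γ) = γ ∧
      (∑ h, (v h - I * cpa h γ) * cv h γ) =
        ((1 + γ - I) / (1 + γ)) * ∑ h, v h * cv h γ) ∧
    AntitoneOn (fun γ => ∑ h, (v h - I * cpa h γ) * cv h γ) Γ := by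

  have hIpos : 0 ≤ I := by rcases hI with h | h <;> simp [h]
  have hpos : ∀ γ ∈ Γ, 0 < 1 + γ := by
    intro γ hγ
    rw [hΓ] at hγ
    have : -1 + I < γ := hγ
    linarith
  have key : ∀ γ ∈ Γ,
      (∑ h, (v h - I * cpa h γ) * cv h γ) =
        ∑ h, v h * (((1 + γ - I) / (1 + γ)) * cv h γ) := by
    intro γ hγ
    apply Finset.sum_congr rfl
    intro h _
    rw [hcpa h γ hγ]
    have hne : (1 + γ) ≠ 0 := ne_of_gt (hpos γ hγ)
    field_simp
  constructor
  · intro γ hγ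
    have h1 := hpos γ hγ
    have hne : (1 + γ) ≠ 0 := ne_of_gt h1
    have hS : 0 < ∑ h, v h * cv h γ :=
      Finset.sum_pos (fun h _ => mul_pos (hv h) (hcv h γ hγ)) Finset.univ_nonempty
    have hSne : (∑ h, v h * cv h γ) ≠ 0 := ne_of_gt hS
    constructor
    · have hnum : (∑ h, (v h - cpa h γ) * cv h γ)
          = (γ / (1 + γ)) * ∑ h, v h * cv h γ := by
        rw [Finset.mul_sum]
        apply Finset.sum_congr rfl
        intro h _
        rw [hcpa h γ hγ]
        field_simp
        ring
      have hden : (∑ h, cpa h γ * cv h γ)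
          = (∑ h, v h * cv h γ) / (1 + γ) := by
        rw [Finset.sum_div]
        apply Finset.sum_congr rfl
        intro h _
        rw [hcpa h γ hγ, div_mul_eq_mul_div]
      rw [hnum, hden]
      field_simp
    · rw [key γ hγ, Finset.mul_sum]
      apply Finset.sum_congr rfl
      intro h _
      ring
  · intro a ha b hb hab
    simp only
    rw [key a ha, key b hb]
    apply Finset.sum_le_sum
    intro h _
    exact mul_le_mul_of_nonneg_left (hmono h ha hb hab) (le_of_lt (hv h))
end

section
/- If the aggregate delivered ROI under report γ equals exactly (Σ_h (v^h − cpa_h(γ))·cv_h(γ))/(Σ_h cpa_h(γ)·cv_h(γ)) = γ in each sub-market simultaneously (i.e., cpa_h(γ) = v^h/(1+γ) for each h), then for any true type γ₀, the set of feasible reports is exactly {γ' : γ' ≥ γ₀}, and under a non-increasing truthful-utility function, reporting γ₀ is weakly optimal among all feasible reports. -/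
/-- If cpa_h(γ) = v^h/(1+γ) in every sub-market (so aggregate delivered ROI under report γ'
equals γ'), then for any true type γ₀ the feasible reports are exactly {γ' : γ' ≥ γ₀}, and
with a non-increasing truthful-utility function W, reporting γ₀ is weakly optimal among
feasible reports. -/
theorem feasible_reports_and_truthful_optimal
    {H : Type*} [Fintype H] [Nonempty H]
    (I : ℝ) (hI : I = 0 ∨ I = 1)
    (Γ : Set ℝ) (hΓ : Γ = Set.Ioi (-1 + I))
    (v : H → ℝ) (hv : ∀ h, 0 < v h)
    (cpa cv : H → ℝ → ℝ)
    (hcpa : ∀ h, ∀ γ ∈ Γ, cpa h γ = v h / (1 + γ))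
    (hcv : ∀ h, ∀ γ ∈ Γ, 0 < cv h γ)
    (W : ℝ → ℝ)
    (hW : ∀ γ ∈ Γ, W γ = ((1 + γ - I) / (1 + γ)) * ∑ h, v h * cv h γ)
    (hWmono : AntitoneOn W Γ) :
    ∀ γ₀ ∈ Γ,
      ({γ' | γ' ∈ Γ ∧
          γ₀ ≤ (∑ h, (v h - cpa h γ') * cv h γ') / (∑ h, cpa h γ' * cv h γ')} =
        {γ' | γ' ∈ Γ ∧ γ₀ ≤ γ'}) ∧
      (∀ γ' ∈ Γ, γ₀ ≤ γ' → W γ' ≤ W γ₀) := by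
  have hpos : ∀ γ ∈ Γ, (0:ℝ) < 1 + γ := by
    intro γ hγ
    rw [hΓ, Set.mem_Ioi] at hγ
    rcases hI with h | h <;> simp [h] at hγ <;> linarith
  have hratio : ∀ γ' ∈ Γ,
      (∑ h, (v h - cpa h γ') * cv h γ') / (∑ h, cpa h γ' * cv h γ') = γ' := by
    intro γ' hγ'
    have h1 := hpos γ' hγ'
    have hden : (0:ℝ) < ∑ h, cpa h γ' * cv h γ' := by
      apply Finset.sum_pos
      · intro h _
        rw [hcpa h γ' hγ']
        exact mul_pos (div_pos (hv h) h1) (hcv h γ' hγ')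
      · exact Finset.univ_nonempty
    have hnum : (∑ h, (v h - cpa h γ') * cv h γ') = γ' * ∑ h, cpa h γ' * cv h γ' := by
      rw [Finset.mul_sum]
      apply Finset.sum_congr rfl
      intro h _
      rw [hcpa h γ' hγ']
      field_simp
      ring
    rw [hnum, mul_div_assoc, div_self hden.ne', mul_one]
  intro γ₀ hγ₀
  constructor
  · ext γ'
    simp only [Set.mem_setOf_eq]
    constructor
    · rintro ⟨h1, h2⟩
      exact ⟨h1, by rwa [hratio γ' h1] at h2⟩
    · rintro ⟨h1, h2⟩
      exact ⟨h1, by rwa [hratio γ' h1]⟩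
  · intro γ' hγ' hle
    exact hWmono hγ₀ hγ' hle
end

section
/- Given a cumulative conversion function cv(γ) > 0, a linear decomposition with weights k_h ≥ 0 summing to 1, and sub-market CPA functions cpa_h(γ) satisfying Σ_h v^h·k_h = (1+γ)·Σ_h cpa_h(γ)·k_h for all γ, if γ ↦ ((1+γ−I)/(1+γ))·cv(γ) is non-increasing then the delivery mechanism {(cpa_h, k_h·cv)} is IC and IR: the realized aggregate ROI under report γ equals γ and the total utility equals ((1+γ−I)/(1+γ))·cv(γ)·Σ_h v^h·k_h, which is non-increasing in γ. -/
/-- Linear decomposition mechanism: given weights k_h ≥ 0 summing to 1 with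
Σ v^h·k_h = (1+γ)·Σ cpa_h(γ)·k_h for every report γ, and ((1+γ−I)/(1+γ))·cv(γ)
non-increasing, the delivery mechanism {(cpa_h, k_h·cv)} delivers aggregate ROI exactly γ
and total utility ((1+γ−I)/(1+γ))·cv(γ)·Σ v^h·k_h, non-increasing in γ. -/
theorem linear_decomposition_ic_ir
    {H : Type*} [Fintype H] [Nonempty H]
    (I : ℝ) (hI : I = 0 ∨ I = 1)
    (Γ : Set ℝ) (hΓ : Γ = Set.Ioi (-1 + I))
    (v : H → ℝ) (hv : ∀ h, 0 < v h)
    (k : H → ℝ) (hk : ∀ h, 0 ≤ k h) (hksum : ∑ h, k h = 1)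
    (cpa : H → ℝ → ℝ) (cv : ℝ → ℝ)
    (hcv : ∀ γ ∈ Γ, 0 < cv γ)
    (hvk : 0 < ∑ h, v h * k h)
    (hcpak : ∀ γ ∈ Γ, 0 < ∑ h, cpa h γ * k h)
    (hid : ∀ γ ∈ Γ, ∑ h, v h * k h = (1 + γ) * ∑ h, cpa h γ * k h)
    (hmono : AntitoneOn (fun γ => ((1 + γ - I) / (1 + γ)) * cv γ) Γ) :
    (∀ γ ∈ Γ,
      (∑ h, (v h - cpa h γ) * (k h * cv γ)) / (∑ h, cpa h γ * (k h * cv γ)) = γ ∧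
      (∑ h, (v h - I * cpa h γ) * (k h * cv γ)) =
        ((1 + γ - I) / (1 + γ)) * cv γ * ∑ h, v h * k h) ∧
    AntitoneOn (fun γ => ∑ h, (v h - I * cpa h γ) * (k h * cv γ)) Γ := by
  have hIpos : (0:ℝ) ≤ I := by rcases hI with h | h <;> simp [h]
  have h1γ : ∀ γ ∈ Γ, (0:ℝ) < 1 + γ := by
    intro γ hγ
    rw [hΓ, Set.mem_Ioi] at hγ
    linarith
  have key : ∀ γ ∈ Γ,
      (∑ h, (v h - I * cpa h γ) * (k h * cv γ)) =
        ((1 + γ - I) / (1 + γ)) * cv γ * ∑ h, v h * k h := by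
    intro γ hγ
    have h1 := h1γ γ hγ
    have h1' : (1:ℝ) + γ ≠ 0 := ne_of_gt h1
    have e1 : ∑ h, (v h - I * cpa h γ) * (k h * cv γ)
        = (∑ h, v h * k h) * cv γ - I * ((∑ h, cpa h γ * k h) * cv γ) := by
      simp only [Finset.sum_mul, Finset.mul_sum, ← Finset.sum_sub_distrib]
      exact Finset.sum_congr rfl (fun h _ => by ring)
    rw [e1, hid γ hγ]
    field_simp
  refine ⟨fun γ hγ => ⟨?_, key γ hγ⟩, ?_⟩
  · have h1 := h1γ γ hγ
    have hS := hcpak γ hγ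
    have hc := hcv γ hγ
    have e1 : ∑ h, (v h - cpa h γ) * (k h * cv γ)
        = ((∑ h, v h * k h) - (∑ h, cpa h γ * k h)) * cv γ := by
      simp only [sub_mul, Finset.sum_mul, ← Finset.sum_sub_distrib]
      exact Finset.sum_congr rfl (fun h _ => by ring)
    have e2 : ∑ h, cpa h γ * (k h * cv γ) = (∑ h, cpa h γ * k h) * cv γ := by
      rw [Finset.sum_mul]
      exact Finset.sum_congr rfl (fun h _ => by ring)
    rw [e1, e2, hid γ hγ]
    field_simp
    ring
  · intro a ha b hb hab
    have := hmono ha hb hab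
    simpa [key a ha, key b hb] using
      mul_le_mul_of_nonneg_right this (le_of_lt hvk)
end
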